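/- arXiv:1208.6351 — 3 statements merged into one kernel-verified Lean document; each statement's English description precedes it below -/
import Mathlib

section
/- Let K be a real symmetric m×m matrix, d ∈ ℝ^m, and suppose 1 is an eigenvalue of K with orthonormal eigenvectors φ₁,…,φ_r spanning ker(K − E). Suppose â ∈ ℝ^m satisfies (K − E) â = d − ∑_{i=1}^r ⟨d, φ_i⟩ φ_i. Then for any constants c₁,…,c_r, the function x(t) = −(ln t / ln 2) ∑_{i=1}^r ⟨d, φ_i⟩ φ_i + ∑_{i=1}^r c_i φ_i + â satisfies, for all t > 0, ∫₀^{t/2} K x(s) ds + ∫_{t/2}^{t} (K − 2E) x(s) ds = d t. -/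
open Matrix Real intervalIntegral MeasureTheory Set

lemma aux_intervalIntegrable_log_zero (a : ℝ) (ha : 0 < a) :
    IntervalIntegrable Real.log volume 0 a := by
  have h01 : IntervalIntegrable Real.log volume 0 1 := by
    have hneg : IntervalIntegrable (fun s => -Real.log s) volume 0 1 := by
      apply intervalIntegrable_deriv_of_nonneg (g := fun s => s - s * Real.log s)
      · exact (continuous_id.sub Real.continuous_mul_log).continuousOn
      · intro s hs
        simp only [min_eq_left (zero_le_one' ℝ), max_eq_right (zero_le_one' ℝ)] at hs
        have h := (hasDerivAt_id s).sub (Real.hasDerivAt_mul_log (ne_of_gt hs.1))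
        exact h.congr_deriv (by ring)
      · intro s hs
        simp only [min_eq_left (zero_le_one' ℝ), max_eq_right (zero_le_one' ℝ)] at hs
        simp only [neg_nonneg]
        exact Real.log_nonpos hs.1.le hs.2.le
    have hrw : Real.log = fun s => -(-Real.log s) := by funext s; ring
    rw [hrw]
    exact hneg.neg
  rcases le_total a 1 with h | h
  · apply h01.mono_set
    rw [Set.uIcc_of_le ha.le, Set.uIcc_of_le zero_le_one]
    exact Set.Icc_subset_Icc le_rfl h
  · exact h01.trans (intervalIntegrable_log (notMem_uIcc_of_lt zero_lt_one ha))

lemma aux_integral_log_zero (a : ℝ) (ha : 0 < a) :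
    ∫ s in (0:ℝ)..a, Real.log s = a * Real.log a - a := by
  have := intervalIntegral.integral_eq_sub_of_hasDeriv_right_of_le (a := 0) (b := a)
    (f := fun s => s * Real.log s - s) (f' := Real.log) ha.le
    ((Real.continuous_mul_log.sub continuous_id).continuousOn)
    (fun s hs => by
      have h : HasDerivAt (fun s => s * Real.log s - s) (Real.log s) s := by
        have h' := (Real.hasDerivAt_mul_log (ne_of_gt hs.1)).sub (hasDerivAt_id s)
        exact h'.congr_deriv (by ring)
      exact h.hasDerivWithinAt)
    (aux_intervalIntegrable_log_zero a ha)
  simpa using this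

/-- closed-form parametric family of solutions in the example. -/
theorem example_parametric_family_of_solutions (m r : ℕ)
    (K : Matrix (Fin m) (Fin m) ℝ) (hK : K.IsSymm)
    (d : Fin m → ℝ) (φ : Fin r → (Fin m → ℝ))
    (horth : ∀ i j : Fin r, φ i ⬝ᵥ φ j = if i = j then 1 else 0)
    (heig : ∀ i : Fin r, K.mulVec (φ i) = φ i)
    (aHat : Fin m → ℝ)
    (haHat : (K - 1).mulVec aHat = d - ∑ i : Fin r, (d ⬝ᵥ φ i) • φ i)
    (c : Fin r → ℝ)
    (x : ℝ → Fin m → ℝ)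
    (hx : ∀ t : ℝ, x t =
      (-(Real.log t / Real.log 2)) • (∑ i : Fin r, (d ⬝ᵥ φ i) • φ i) +
        (∑ i : Fin r, c i • φ i) + aHat) :
    ∀ t : ℝ, 0 < t →
      (∫ s in (0 : ℝ)..(t / 2), K.mulVec (x s)) +
        (∫ s in (t / 2)..t, (K - 2 • (1 : Matrix (Fin m) (Fin m) ℝ)).mulVec (x s)) =
        t • d := by
  intro t ht
  set p : Fin m → ℝ := ∑ i : Fin r, (d ⬝ᵥ φ i) • φ i with hp
  set q : Fin m → ℝ := ∑ i : Fin r, c i • φ i with hq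
  have hKsum : ∀ (a : Fin r → ℝ), K.mulVec (∑ i, a i • φ i) = ∑ i, a i • φ i := by
    intro a
    rw [← Matrix.mulVecLin_apply, map_sum]
    refine Finset.sum_congr rfl fun i _ => ?_
    rw [LinearMap.map_smul, Matrix.mulVecLin_apply, heig]
  have hKp : K.mulVec p = p := hKsum _
  have hKq : K.mulVec q = q := hKsum _
  have hKa : K.mulVec aHat = aHat + (d - p) := by
    have h := haHat
    rw [Matrix.sub_mulVec, Matrix.one_mulVec] at h
    rw [← h]
    abel
  -- first integrand
  have hI1 : ∀ s : ℝ, K.mulVec (x s) =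
      Real.log s • ((-(Real.log 2)⁻¹) • p) + (q + (aHat + (d - p))) := by
    intro s
    rw [hx s, Matrix.mulVec_add, Matrix.mulVec_add, Matrix.mulVec_smul, hKp, hKq, hKa]
    match_scalars <;> ring
  have hI2 : ∀ s : ℝ, (K - 2 • (1 : Matrix (Fin m) (Fin m) ℝ)).mulVec (x s) =
      Real.log s • ((Real.log 2)⁻¹ • p) + ((d - p) - q - aHat) := by
    intro s
    have h2 : (K - 2 • (1 : Matrix (Fin m) (Fin m) ℝ)).mulVec (x s)
        = K.mulVec (x s) - (x s + x s) := by
      rw [Matrix.sub_mulVec, two_smul, Matrix.add_mulVec, Matrix.one_mulVec]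
    rw [h2, hI1 s, hx s]
    match_scalars <;> ring
  have hint : ∀ (a b : ℝ) (v w : Fin m → ℝ), IntervalIntegrable Real.log volume a b →
      (∫ s in a..b, (Real.log s • v + w)) = (∫ s in a..b, Real.log s) • v + (b - a) • w := by
    intro a b v w h
    have hsm : IntervalIntegrable (fun s => Real.log s • v) volume a b :=
      ⟨h.1.smul_const v, h.2.smul_const v⟩
    rw [intervalIntegral.integral_add hsm intervalIntegrable_const,
      intervalIntegral.integral_smul_const, intervalIntegral.integral_const]
  have ht2 : (0:ℝ) < t / 2 := by linarith
  have hL1 : IntervalIntegrable Real.log volume 0 (t / 2) :=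
    aux_intervalIntegrable_log_zero _ ht2
  have hL2 : IntervalIntegrable Real.log volume (t / 2) t :=
    intervalIntegrable_log (notMem_uIcc_of_lt ht2 ht)
  have e1 : (∫ s in (0:ℝ)..(t/2), K.mulVec (x s)) =
      (t/2 * Real.log (t/2) - t/2) • ((-(Real.log 2)⁻¹) • p) + (t/2 - 0) • (q + (aHat + (d - p))) := by
    rw [intervalIntegral.integral_congr (g := fun s => Real.log s • ((-(Real.log 2)⁻¹) • p) + (q + (aHat + (d - p)))) (fun s _ => hI1 s),
      hint _ _ _ _ hL1, aux_integral_log_zero _ ht2]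
  have e2 : (∫ s in (t/2)..t, (K - 2 • (1 : Matrix (Fin m) (Fin m) ℝ)).mulVec (x s)) =
      (t * Real.log t - (t/2) * Real.log (t/2) - t + t/2) • ((Real.log 2)⁻¹ • p) + (t - t/2) • ((d - p) - q - aHat) := by
    rw [intervalIntegral.integral_congr (g := fun s => Real.log s • ((Real.log 2)⁻¹ • p) + ((d - p) - q - aHat)) (fun s _ => hI2 s),
      hint _ _ _ _ hL2, integral_log]
  rw [e1, e2]
  have hlt : Real.log (t/2) = Real.log t - Real.log 2 :=
    Real.log_div (ne_of_gt ht) two_ne_zero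
  have hl2 : Real.log 2 ≠ 0 := ne_of_gt (Real.log_pos one_lt_two)
  rw [hlt]
  match_scalars <;> field_simp [hl2] <;> ring
end

section
/- Let K₁, K₂ : [0,T]×[0,T] → Matrix m m ℝ be continuously differentiable in t, α ∈ (0,1), f : [0,T] → ℝ^m continuously differentiable with f(0) = 0, and let x : (0,T] → ℝ^m be continuous and integrable near 0. Then x satisfies ∫₀^{α t} K₁(t,s) x(s) ds + ∫_{α t}^{t} K₂(t,s) x(s) ds = f(t) for all t ∈ (0,T] if and only if x satisfies the differentiated equation K₂(t,t) x(t) + α (K₁(t, α t) − K₂(t, α t)) x(α t) + ∫₀^{α t} ∂_t K₁(t,s) x(s) ds + ∫_{α t}^{t} ∂_t K₂(t,s) x(s) ds = f'(t) for all t ∈ (0,T]. -/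
open Real Set intervalIntegral

open MeasureTheory Metric Filter Topology

variable {E : Type*} [NormedAddCommGroup E] [NormedSpace ℝ E] [CompleteSpace E]

lemma integrableOn_clm_apply' {T : ℝ} (K : ℝ → ℝ → (E →L[ℝ] E))
    (hKc : Continuous fun p : ℝ × ℝ => K p.1 p.2)
    {x : ℝ → E} (hxint : IntegrableOn x (Ioc 0 T)) (t : ℝ) :
    IntegrableOn (fun s => K t s (x s)) (Ioc 0 T) := by
  have hmeas : AEStronglyMeasurable (fun s => K t s (x s))
      (MeasureTheory.volume.restrict (Ioc 0 T)) := by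
    have hc : Continuous fun p : ℝ × E => K t p.1 p.2 :=
      (hKc.comp (continuous_const.prodMk continuous_fst)).clm_apply continuous_snd
    exact hc.comp_aestronglyMeasurable
      (aestronglyMeasurable_id.prodMk hxint.aestronglyMeasurable)
  obtain ⟨C, hC⟩ := (isCompact_Icc (a := (0:ℝ)) (b := T)).exists_bound_of_continuousOn
    ((hKc.comp (continuous_const.prodMk continuous_id)).continuousOn (s := Icc 0 T))
  refine (hxint.norm.const_mul C).mono' hmeas ?_
  filter_upwards [MeasureTheory.ae_restrict_mem measurableSet_Ioc] with s hs
  calc ‖K t s (x s)‖ ≤ ‖K t s‖ * ‖x s‖ := (K t s).le_opNorm _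
    _ ≤ C * ‖x s‖ := mul_le_mul_of_nonneg_right (hC s ⟨hs.1.le, hs.2⟩) (norm_nonneg _)

lemma intervalIntegrable_clm_apply' {T : ℝ} (K : ℝ → ℝ → (E →L[ℝ] E))
    (hKc : Continuous fun p : ℝ × ℝ => K p.1 p.2)
    {x : ℝ → E} (hxint : IntegrableOn x (Ioc 0 T)) (t : ℝ)
    {u v : ℝ} (hu0 : 0 ≤ u) (huT : u ≤ T) (hv0 : 0 ≤ v) (hvT : v ≤ T) :
    IntervalIntegrable (fun s => K t s (x s)) MeasureTheory.volume u v := by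
  rw [intervalIntegrable_iff]
  exact (integrableOn_clm_apply' K hKc hxint t).mono_set
    (Set.Ioc_subset_Ioc (le_min hu0 hv0) (max_le huT hvT))

lemma keyDeriv {T : ℝ} (hT : 0 < T) {α : ℝ} (hα0 : 0 < α) (hα1 : α ≤ 1)
    (K K' : ℝ → ℝ → (E →L[ℝ] E))
    (hKc : Continuous fun p : ℝ × ℝ => K p.1 p.2)
    (hK'c : Continuous fun p : ℝ × ℝ => K' p.1 p.2)
    (hKd : ∀ s t : ℝ, HasDerivAt (fun τ => K τ s) (K' t s) t)
    {x : ℝ → E} (hxc : ContinuousOn x (Ioc 0 T)) (hxint : IntegrableOn x (Ioc 0 T))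
    {t0 : ℝ} (ht0 : t0 ∈ Ioc 0 T) :
    HasDerivWithinAt (fun t => ∫ s in (0:ℝ)..(α*t), K t s (x s))
      (α • (K t0 (α*t0) (x (α*t0))) + ∫ s in (0:ℝ)..(α*t0), K' t0 s (x s)) (Iic T) t0 := by
  obtain ⟨ht0p, ht0T⟩ := ht0
  set v0 : ℝ := α * t0 with hv0def
  have hv0p : 0 < v0 := mul_pos hα0 ht0p
  have hv0T : v0 ≤ T := le_trans (by nlinarith) ht0T
  -- the `Ψ` part: FTC for the moving endpoint
  have hΨ : HasDerivWithinAt (fun v => ∫ s in (0:ℝ)..v, K t0 s (x s))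
      (K t0 v0 (x v0)) (Iic T) v0 := by
    have hint : IntervalIntegrable (fun s => K t0 s (x s)) MeasureTheory.volume 0 v0 :=
      intervalIntegrable_clm_apply' K hKc hxint t0 le_rfl hT.le hv0p.le hv0T
    have hKt0 : Continuous fun s => K t0 s :=
      hKc.comp (continuous_const.prodMk continuous_id)
    rcases eq_or_lt_of_le hv0T with hv0T' | hv0T'
    · -- v0 = T : one-sided FTC
      subst hv0T'
      have hxw : ContinuousWithinAt x (Iic v0) v0 := by
        have := hxc v0 ⟨hv0p, le_rfl⟩
        rwa [ContinuousWithinAt, nhdsWithin_Ioc_eq_nhdsLE hv0p] at this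
      have hcw : ContinuousWithinAt (fun s => K t0 s (x s)) (Iic v0) v0 :=
        (hKt0.continuousWithinAt).clm_apply hxw
      have hsm : StronglyMeasurableAtFilter (fun s => K t0 s (x s)) (𝓝[Iic v0] v0) := by
        refine ⟨Ioc 0 v0, ?_, (integrableOn_clm_apply' K hKc hxint t0).aestronglyMeasurable⟩
        exact mem_nhdsWithin.2 ⟨Ioi 0, isOpen_Ioi, hv0p, fun y hy => ⟨hy.1, hy.2⟩⟩
      exact integral_hasDerivWithinAt_right hint hsm hcw
    · -- v0 < T : two-sided FTC
      have hmem : Ioc (0:ℝ) T ∈ 𝓝 v0 := Ioc_mem_nhds hv0p hv0T'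
      have hxat : ContinuousAt x v0 := hxc.continuousAt hmem
      have hca : ContinuousAt (fun s => K t0 s (x s)) v0 :=
        (hKt0.continuousAt).clm_apply hxat
      have hsm : StronglyMeasurableAtFilter (fun s => K t0 s (x s)) (𝓝 v0) :=
        ⟨Ioc 0 T, hmem, (integrableOn_clm_apply' K hKc hxint t0).aestronglyMeasurable⟩
      exact (integral_hasDerivAt_right hint hsm hca).hasDerivWithinAt
  have hc : HasDerivWithinAt (fun t : ℝ => α * t) α (Iic T) t0 := by
    simpa using ((hasDerivAt_id t0).const_mul α).hasDerivWithinAt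
  have hmap : MapsTo (fun t : ℝ => α * t) (Iic T) (Iic T) := by
    intro t ht
    simp only [mem_Iic] at ht ⊢
    nlinarith [mul_le_mul_of_nonneg_left ht hα0.le]
  have hΨc : HasDerivWithinAt (fun t => ∫ s in (0:ℝ)..(α*t), K t0 s (x s))
      (α • (K t0 v0 (x v0))) (Iic T) t0 :=
    hΨ.scomp t0 hc hmap
  -- the `Q` part: differentiation under the integral sign (fixed endpoints)
  obtain ⟨C, hC⟩ := ((isCompact_Icc (a := t0-1) (b := t0+1)).prod
      (isCompact_Icc (a := (0:ℝ)) (b := T))).exists_bound_of_continuousOn hK'c.continuousOn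
  have hsub : Set.uIoc (0:ℝ) v0 ⊆ Ioc 0 T := by
    rw [uIoc_of_le hv0p.le]
    exact Ioc_subset_Ioc le_rfl hv0T
  have hmeasK : ∀ t : ℝ, AEStronglyMeasurable (fun s => K t s (x s))
      (MeasureTheory.volume.restrict (Set.uIoc (0:ℝ) v0)) := fun t =>
    ((integrableOn_clm_apply' K hKc hxint t).mono_set hsub).aestronglyMeasurable
  have hmeasK' : AEStronglyMeasurable (fun s => K' t0 s (x s))
      (MeasureTheory.volume.restrict (Set.uIoc (0:ℝ) v0)) :=
    ((integrableOn_clm_apply' K' hK'c hxint t0).mono_set hsub).aestronglyMeasurable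
  have hQ : HasDerivAt (fun t => ∫ s in (0:ℝ)..v0, (K t s (x s) - K t0 s (x s)))
      (∫ s in (0:ℝ)..v0, K' t0 s (x s)) t0 := by
    refine (intervalIntegral.hasDerivAt_integral_of_dominated_loc_of_deriv_le
      (F := fun t s => K t s (x s) - K t0 s (x s)) (F' := fun t s => K' t s (x s))
      (bound := fun s => C * ‖x s‖) (Metric.ball_mem_nhds t0 one_pos)
      (Eventually.of_forall fun t => (hmeasK t).sub (hmeasK t0))
      ((intervalIntegrable_clm_apply' K hKc hxint t0 le_rfl hT.le hv0p.le hv0T).sub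
        (intervalIntegrable_clm_apply' K hKc hxint t0 le_rfl hT.le hv0p.le hv0T))
      hmeasK' ?_ ?_ ?_).2
    · refine Eventually.of_forall fun s hs τ hτ => ?_
      have hsIcc : s ∈ Icc (0:ℝ) T := Ioc_subset_Icc_self (hsub hs)
      have hτIcc : τ ∈ Icc (t0-1) (t0+1) := by
        rw [mem_ball, Real.dist_eq] at hτ
        constructor <;> [linarith [abs_lt.1 hτ]; linarith [abs_lt.1 hτ]]
      calc ‖K' τ s (x s)‖ ≤ ‖K' τ s‖ * ‖x s‖ := (K' τ s).le_opNorm _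
        _ ≤ C * ‖x s‖ :=
          mul_le_mul_of_nonneg_right (hC (τ, s) ⟨hτIcc, hsIcc⟩) (norm_nonneg _)
    · exact intervalIntegrable_iff.2 (MeasureTheory.IntegrableOn.mono_set (hxint.norm.const_mul C) hsub)
    · refine Eventually.of_forall fun s hs τ hτ => ?_
      have h := (hKd s τ).clm_apply (hasDerivAt_const τ (x s))
      simpa using h.sub_const (K t0 s (x s))
  -- the `R` part is o(t - t0)
  have hRlittle : (fun t => ∫ s in v0..(α*t), (K t s (x s) - K t0 s (x s)))
      =o[𝓝[Iic T] t0] (fun t => t - t0) := by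
    rw [Asymptotics.isLittleO_iff]
    intro c hc
    set M : ℝ := ‖x v0‖ + 1 with hMdef
    have hM : 0 < M := by positivity
    have hev : {σ : ℝ | ‖x σ‖ < M} ∈ 𝓝[Ioc 0 T] v0 :=
      (hxc v0 ⟨hv0p, hv0T⟩).norm.eventually_lt_const (by simp [hMdef])
    rw [Metric.mem_nhdsWithin_iff] at hev
    obtain ⟨δ₁, hδ₁pos, hδ₁⟩ := hev
    have hKuc := ((isCompact_Icc (a := t0-1) (b := t0+1)).prod
      (isCompact_Icc (a := (0:ℝ)) (b := T))).uniformContinuousOn_of_continuous hKc.continuousOn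
    rw [Metric.uniformContinuousOn_iff] at hKuc
    obtain ⟨δ₂, hδ₂pos, hδ₂⟩ := hKuc (c/M) (by positivity)
    set δ : ℝ := min δ₂ (min 1 (min δ₁ t0)) with hδdef
    have hδpos : 0 < δ := by
      simp only [hδdef, lt_min_iff]
      exact ⟨hδ₂pos, one_pos, hδ₁pos, ht0p⟩
    filter_upwards [nhdsWithin_le_nhds (Metric.ball_mem_nhds t0 hδpos),
      self_mem_nhdsWithin] with t htb htT
    rw [mem_ball, Real.dist_eq] at htb
    rw [mem_Iic] at htT
    have hδδ₂ : δ ≤ δ₂ := min_le_left _ _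
    have hδ1 : δ ≤ 1 := le_trans (min_le_right _ _) (min_le_left _ _)
    have hδδ₁ : δ ≤ δ₁ := le_trans (min_le_right _ _) (le_trans (min_le_right _ _) (min_le_left _ _))
    have hδt0 : δ ≤ t0 := le_trans (min_le_right _ _) (le_trans (min_le_right _ _) (min_le_right _ _))
    have habs := abs_lt.1 htb
    have htpos : 0 < t := by linarith
    have hαtpos : 0 < α * t := mul_pos hα0 htpos
    have hαtT : α * t ≤ T := by nlinarith [mul_le_mul_of_nonneg_left htT hα0.le]
    have habs' : |α * t - v0| ≤ |t - t0| := by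
      rw [hv0def, ← mul_sub, abs_mul, abs_of_pos hα0]
      nlinarith [abs_nonneg (t - t0)]
    have hbd : ∀ σ ∈ Set.uIoc v0 (α*t), ‖K t σ (x σ) - K t0 σ (x σ)‖ ≤ (c/M) * M := by
      intro σ hσ
      have hσIoc : σ ∈ Ioc 0 T := by
        have : Set.uIoc v0 (α*t) ⊆ Ioc 0 T := by
          show Ioc (min v0 (α*t)) (max v0 (α*t)) ⊆ Ioc 0 T
          exact Ioc_subset_Ioc (le_min hv0p.le hαtpos.le) (max_le hv0T hαtT)
        exact this hσ
      have hσnear : |σ - v0| ≤ |α * t - v0| := by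
        rcases le_total v0 (α*t) with h | h
        · rw [uIoc_of_le h] at hσ
          rw [abs_of_pos (by linarith [hσ.1]), abs_of_nonneg (by linarith [hσ.1, hσ.2])]
          linarith [hσ.2]
        · rw [uIoc_of_ge h] at hσ
          rw [abs_of_nonpos (by linarith [hσ.2]), abs_of_nonpos (by linarith [hσ.1])]
          linarith [hσ.1]
      have hxbd : ‖x σ‖ ≤ M := by
        refine le_of_lt (hδ₁ ⟨mem_ball.2 ?_, hσIoc⟩)
        rw [Real.dist_eq]
        calc |σ - v0| ≤ |α * t - v0| := hσnear
          _ ≤ |t - t0| := habs'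
          _ < δ := htb
          _ ≤ δ₁ := hδδ₁
      have hσIcc : σ ∈ Icc (0:ℝ) T := Ioc_subset_Icc_self hσIoc
      have hKbd : ‖K t σ - K t0 σ‖ ≤ c / M := by
        have h1 : (t, σ) ∈ Icc (t0-1) (t0+1) ×ˢ Icc (0:ℝ) T :=
          ⟨⟨by linarith, by linarith⟩, hσIcc⟩
        have h2 : (t0, σ) ∈ Icc (t0-1) (t0+1) ×ˢ Icc (0:ℝ) T :=
          ⟨⟨by linarith, by linarith⟩, hσIcc⟩
        have hd : dist (t, σ) (t0, σ) < δ₂ := by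
          rw [Prod.dist_eq]
          simp only [dist_self]
          rw [max_eq_left dist_nonneg, Real.dist_eq]
          exact lt_of_lt_of_le htb hδδ₂
        have := hδ₂ _ h1 _ h2 hd
        rw [dist_eq_norm] at this
        exact this.le
      calc ‖K t σ (x σ) - K t0 σ (x σ)‖ = ‖(K t σ - K t0 σ) (x σ)‖ := by
            rw [ContinuousLinearMap.sub_apply]
        _ ≤ ‖K t σ - K t0 σ‖ * ‖x σ‖ := (K t σ - K t0 σ).le_opNorm _
        _ ≤ (c/M) * M := mul_le_mul hKbd hxbd (norm_nonneg _) (by positivity)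
    calc ‖∫ s in v0..(α*t), (K t s (x s) - K t0 s (x s))‖
        ≤ (c/M) * M * |α * t - v0| := intervalIntegral.norm_integral_le_of_norm_le_const hbd
      _ = c * |α * t - v0| := by rw [div_mul_cancel₀ _ hM.ne']
      _ ≤ c * ‖t - t0‖ := by
          rw [Real.norm_eq_abs]
          exact mul_le_mul_of_nonneg_left habs' hc.le
  have hR : HasDerivWithinAt (fun t => ∫ s in v0..(α*t), (K t s (x s) - K t0 s (x s)))
      0 (Iic T) t0 := by
    rw [hasDerivWithinAt_iff_isLittleO]
    simpa [← hv0def, intervalIntegral.integral_same] using hRlittle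
  -- assemble
  have hsum := (hQ.hasDerivWithinAt.add hR).add hΨc
  have heq : (fun t => ∫ s in (0:ℝ)..(α*t), K t s (x s)) =ᶠ[𝓝[Iic T] t0]
      (fun t => ((∫ s in (0:ℝ)..v0, (K t s (x s) - K t0 s (x s))) +
        ∫ s in v0..(α*t), (K t s (x s) - K t0 s (x s))) +
        ∫ s in (0:ℝ)..(α*t), K t0 s (x s)) := by
    filter_upwards [nhdsWithin_le_nhds (Metric.ball_mem_nhds t0 ht0p),
      self_mem_nhdsWithin] with t htb htT
    rw [mem_ball, Real.dist_eq] at htb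
    rw [mem_Iic] at htT
    have htpos : 0 < t := by have := abs_lt.1 htb; linarith
    have hαtpos : 0 < α * t := mul_pos hα0 htpos
    have hαtT : α * t ≤ T := by nlinarith [mul_le_mul_of_nonneg_left htT hα0.le]
    have hi1 : IntervalIntegrable (fun s => K t s (x s) - K t0 s (x s))
        MeasureTheory.volume 0 v0 :=
      (intervalIntegrable_clm_apply' K hKc hxint t le_rfl hT.le hv0p.le hv0T).sub
        (intervalIntegrable_clm_apply' K hKc hxint t0 le_rfl hT.le hv0p.le hv0T)
    have hi2 : IntervalIntegrable (fun s => K t s (x s) - K t0 s (x s))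
        MeasureTheory.volume v0 (α*t) :=
      (intervalIntegrable_clm_apply' K hKc hxint t hv0p.le hv0T hαtpos.le hαtT).sub
        (intervalIntegrable_clm_apply' K hKc hxint t0 hv0p.le hv0T hαtpos.le hαtT)
    rw [intervalIntegral.integral_add_adjacent_intervals hi1 hi2,
      intervalIntegral.integral_sub
        (intervalIntegrable_clm_apply' K hKc hxint t le_rfl hT.le hαtpos.le hαtT)
        (intervalIntegrable_clm_apply' K hKc hxint t0 le_rfl hT.le hαtpos.le hαtT)]
    abel
  have hx0 : (∫ s in (0:ℝ)..(α*t0), K t0 s (x s)) =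
      ((∫ s in (0:ℝ)..v0, (K t0 s (x s) - K t0 s (x s))) +
        ∫ s in v0..(α*t0), (K t0 s (x s) - K t0 s (x s))) +
        ∫ s in (0:ℝ)..(α*t0), K t0 s (x s) := by
    simp [← hv0def]
  have hfinal := hsum.congr_of_eventuallyEq heq hx0
  convert hfinal using 1
  rw [add_zero]
  exact add_comm _ _

/-- equivalence of the first-kind equation and the differentiated
integral–functional equation (case n = 2, α₁(t) = α t). -/
theorem first_kind_iff_differentiated (m : ℕ) (T : ℝ) (hT : 0 < T)
    (α : ℝ) (hα0 : 0 < α) (hα1 : α < 1)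
    (A B A' B' : ℝ → ℝ → (EuclideanSpace ℝ (Fin m) →L[ℝ] EuclideanSpace ℝ (Fin m)))
    (hAc : Continuous fun p : ℝ × ℝ => A p.1 p.2)
    (hBc : Continuous fun p : ℝ × ℝ => B p.1 p.2)
    (hA'c : Continuous fun p : ℝ × ℝ => A' p.1 p.2)
    (hB'c : Continuous fun p : ℝ × ℝ => B' p.1 p.2)
    (hAd : ∀ s t : ℝ, HasDerivAt (fun τ => A τ s) (A' t s) t)
    (hBd : ∀ s t : ℝ, HasDerivAt (fun τ => B τ s) (B' t s) t)
    (f f' : ℝ → EuclideanSpace ℝ (Fin m))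
    (hfd : ∀ t : ℝ, HasDerivAt f (f' t) t) (hf0 : f 0 = 0)
    (x : ℝ → EuclideanSpace ℝ (Fin m))
    (hxc : ContinuousOn x (Set.Ioc 0 T))
    (hxint : MeasureTheory.IntegrableOn x (Set.Ioc 0 T)) :
    (∀ t ∈ Set.Ioc (0 : ℝ) T,
        (∫ s in (0 : ℝ)..(α * t), A t s (x s)) +
          (∫ s in (α * t)..t, B t s (x s)) = f t) ↔
      (∀ t ∈ Set.Ioc (0 : ℝ) T,
        B t t (x t) + α • ((A t (α * t) - B t (α * t)) (x (α * t))) +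
          (∫ s in (0 : ℝ)..(α * t), A' t s (x s)) +
          (∫ s in (α * t)..t, B' t s (x s)) = f' t) := by
  set g : ℝ → EuclideanSpace ℝ (Fin m) := fun t =>
    (∫ s in (0:ℝ)..(α*t), A t s (x s)) + ∫ s in (α*t)..t, B t s (x s) with hgdef
  -- derivative of g within Iic T at each point of Ioc 0 T
  have hg : ∀ t0 ∈ Set.Ioc (0:ℝ) T, HasDerivWithinAt g
      (B t0 t0 (x t0) + α • ((A t0 (α*t0) - B t0 (α*t0)) (x (α*t0))) +
        (∫ s in (0:ℝ)..(α*t0), A' t0 s (x s)) +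
        ∫ s in (α*t0)..t0, B' t0 s (x s)) (Iic T) t0 := by
    intro t0 ht0
    have hαt0p : 0 < α * t0 := mul_pos hα0 ht0.1
    have hαt0T : α * t0 ≤ T := by nlinarith [ht0.1, ht0.2]
    have hA1 := keyDeriv hT hα0 hα1.le A A' hAc hA'c hAd hxc hxint ht0
    have hB1 := keyDeriv hT hα0 hα1.le B B' hBc hB'c hBd hxc hxint ht0
    have hB2 := keyDeriv hT one_pos le_rfl B B' hBc hB'c hBd hxc hxint ht0
    simp only [one_mul, one_smul] at hB2
    have hsum := (hA1.add hB2).sub hB1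
    have heq : g =ᶠ[𝓝[Iic T] t0] fun t =>
        ((∫ s in (0:ℝ)..(α*t), A t s (x s)) + ∫ s in (0:ℝ)..t, B t s (x s)) -
          ∫ s in (0:ℝ)..(α*t), B t s (x s) := by
      filter_upwards [nhdsWithin_le_nhds (Metric.ball_mem_nhds t0 ht0.1),
        self_mem_nhdsWithin] with t htb htT
      rw [mem_ball, Real.dist_eq] at htb
      rw [mem_Iic] at htT
      have htpos : 0 < t := by have := abs_lt.1 htb; linarith
      have hαtpos : 0 < α * t := mul_pos hα0 htpos
      have hαtT : α * t ≤ T := by nlinarith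
      have hsplit := intervalIntegral.integral_interval_sub_left
        (intervalIntegrable_clm_apply' B hBc hxint t le_rfl hT.le htpos.le htT)
        (intervalIntegrable_clm_apply' B hBc hxint t le_rfl hT.le hαtpos.le hαtT)
      simp only [hgdef]
      rw [← hsplit]
      abel
    have hx0 : g t0 =
        ((∫ s in (0:ℝ)..(α*t0), A t0 s (x s)) + ∫ s in (0:ℝ)..t0, B t0 s (x s)) -
          ∫ s in (0:ℝ)..(α*t0), B t0 s (x s) := by
      have hsplit := intervalIntegral.integral_interval_sub_left
        (intervalIntegrable_clm_apply' B hBc hxint t0 le_rfl hT.le ht0.1.le ht0.2)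
        (intervalIntegrable_clm_apply' B hBc hxint t0 le_rfl hT.le hαt0p.le hαt0T)
      simp only [hgdef]
      rw [← hsplit]
      abel
    have hD := hsum.congr_of_eventuallyEq heq hx0
    refine hD.congr_deriv ?_
    have hsplit' := intervalIntegral.integral_interval_sub_left
      (intervalIntegrable_clm_apply' B' hB'c hxint t0 le_rfl hT.le ht0.1.le ht0.2)
      (intervalIntegrable_clm_apply' B' hB'c hxint t0 le_rfl hT.le hαt0p.le hαt0T)
    rw [← hsplit', ContinuousLinearMap.sub_apply, smul_sub]
    abel
  constructor
  · -- first-kind equation implies differentiated equation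
    intro H t0 ht0
    have hud : UniqueDiffWithinAt ℝ (Set.Ioc (0:ℝ) T) t0 := uniqueDiffOn_Ioc 0 T t0 ht0
    have h1 := ((hg t0 ht0).mono Ioc_subset_Iic_self).derivWithin hud
    have h2 := (((hfd t0).hasDerivWithinAt (s := Set.Ioc 0 T)).congr
      (fun y hy => H y hy) (H t0 ht0)).derivWithin hud
    exact h1.symm.trans h2
  · -- differentiated equation implies first-kind equation
    intro H t ht
    set h : ℝ → EuclideanSpace ℝ (Fin m) := fun τ => g τ - f τ with hhdef
    have hd0 : ∀ y ∈ Set.Ioc (0:ℝ) T, HasDerivWithinAt h 0 (Iic T) y := by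
      intro y hy
      have := (hg y hy).sub ((hfd y).hasDerivWithinAt)
      rwa [H y hy, sub_self] at this
    have hstep : ∀ ε ∈ Set.Ioc (0:ℝ) t, h t = h ε := by
      intro ε hε
      have hcont : ContinuousOn h (Icc ε t) := by
        intro y hy
        have hyIoc : y ∈ Set.Ioc (0:ℝ) T := ⟨lt_of_lt_of_le hε.1 hy.1, le_trans hy.2 ht.2⟩
        exact ((hd0 y hyIoc).continuousWithinAt).mono (fun z hz => le_trans hz.2 ht.2)
      have hderiv : ∀ y ∈ Ico ε t, HasDerivWithinAt h 0 (Ici y) y := by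
        intro y hy
        have hyIoc : y ∈ Set.Ioc (0:ℝ) T := ⟨lt_of_lt_of_le hε.1 hy.1, le_trans hy.2.le ht.2⟩
        have hyT : y < T := lt_of_lt_of_le hy.2 ht.2
        exact ((hd0 y hyIoc).hasDerivAt (Iic_mem_nhds hyT)).hasDerivWithinAt
      exact constant_of_has_deriv_right_zero hcont hderiv t (right_mem_Icc.2 hε.2)
    -- the function h tends to 0 at 0⁺
    obtain ⟨CA, hCA⟩ := ((isCompact_Icc (a := (0:ℝ)) (b := T)).prod
      (isCompact_Icc (a := (0:ℝ)) (b := T))).exists_bound_of_continuousOn hAc.continuousOn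
    obtain ⟨CB, hCB⟩ := ((isCompact_Icc (a := (0:ℝ)) (b := T)).prod
      (isCompact_Icc (a := (0:ℝ)) (b := T))).exists_bound_of_continuousOn hBc.continuousOn
    have hCA0 : 0 ≤ CA := le_trans (norm_nonneg _) (hCA (0, 0) (Set.mk_mem_prod ⟨le_rfl, hT.le⟩ ⟨le_rfl, hT.le⟩))
    have hCB0 : 0 ≤ CB := le_trans (norm_nonneg _) (hCB (0, 0) (Set.mk_mem_prod ⟨le_rfl, hT.le⟩ ⟨le_rfl, hT.le⟩))
    have hρ : Tendsto (fun ε => ∫ s in Set.Ioc (0:ℝ) ε, ‖x s‖) (𝓝[>] (0:ℝ)) (𝓝 0) := by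
      have hmeas : Tendsto (fun ε => (MeasureTheory.volume.restrict (Set.Ioc (0:ℝ) T))
          (Set.Ioc 0 ε)) (𝓝[>] (0:ℝ)) (𝓝 0) := by
        have hle : ∀ ε : ℝ, (MeasureTheory.volume.restrict (Set.Ioc (0:ℝ) T)) (Set.Ioc 0 ε)
            ≤ ENNReal.ofReal ε := fun ε => by
          rw [MeasureTheory.Measure.restrict_apply measurableSet_Ioc]
          refine le_trans (MeasureTheory.measure_mono Set.inter_subset_left) ?_
          rw [Real.volume_Ioc]
          exact ENNReal.ofReal_le_ofReal (by linarith)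
        have hup : Tendsto (fun ε : ℝ => ENNReal.ofReal ε) (𝓝[>] (0:ℝ)) (𝓝 0) := by
          have : Tendsto (fun ε : ℝ => ε) (𝓝[>] (0:ℝ)) (𝓝 0) :=
            tendsto_id.mono_left nhdsWithin_le_nhds
          simpa using ENNReal.tendsto_ofReal this
        exact tendsto_of_tendsto_of_tendsto_of_le_of_le tendsto_const_nhds hup
          (fun ε => zero_le) hle
      have := hxint.norm.tendsto_setIntegral_nhds_zero hmeas
      refine this.congr' ?_
      filter_upwards [Ioc_mem_nhdsGT_of_mem (Set.mem_Ico.2 ⟨le_rfl, hT⟩)] with ε hε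
      rw [MeasureTheory.Measure.restrict_restrict measurableSet_Ioc,
        Set.inter_eq_left.2 (Set.Ioc_subset_Ioc_right hε.2)]
    have hgb : ∀ᶠ ε in 𝓝[>] (0:ℝ), ‖g ε‖ ≤ (CA + CB) * ∫ s in Set.Ioc (0:ℝ) ε, ‖x s‖ := by
      filter_upwards [Ioc_mem_nhdsGT_of_mem (Set.mem_Ico.2 ⟨le_rfl, hT⟩)] with ε hε
      have hαεp : 0 < α * ε := mul_pos hα0 hε.1
      have hαεε : α * ε ≤ ε := by nlinarith [hε.1]
      have hbound : ∀ (K : ℝ → ℝ → (EuclideanSpace ℝ (Fin m) →L[ℝ] EuclideanSpace ℝ (Fin m))) (CK : ℝ), 0 ≤ CK →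
          (∀ p ∈ Icc (0:ℝ) T ×ˢ Icc (0:ℝ) T, ‖K p.1 p.2‖ ≤ CK) →
          (Continuous fun p : ℝ × ℝ => K p.1 p.2) →
          ∀ u v : ℝ, 0 ≤ u → u ≤ v → v ≤ ε →
          ‖∫ s in u..v, K ε s (x s)‖ ≤ CK * ∫ s in Set.Ioc (0:ℝ) ε, ‖x s‖ := by
        intro K CK hCK0 hCK hKc u v hu huv hvε
        have hsub1 : Set.Ioc u v ⊆ Set.Ioc (0:ℝ) ε := Set.Ioc_subset_Ioc hu hvε
        have hsub2 : Set.Ioc (0:ℝ) ε ⊆ Set.Ioc (0:ℝ) T := Set.Ioc_subset_Ioc_right hε.2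
        rw [intervalIntegral.integral_of_le huv]
        calc ‖∫ s in Set.Ioc u v, K ε s (x s)‖
            ≤ ∫ s in Set.Ioc u v, ‖K ε s (x s)‖ := MeasureTheory.norm_integral_le_integral_norm _
          _ ≤ ∫ s in Set.Ioc u v, CK * ‖x s‖ := by
              refine MeasureTheory.setIntegral_mono_on
                (MeasureTheory.IntegrableOn.mono_set
                  ((integrableOn_clm_apply' K hKc hxint ε).norm) (hsub1.trans hsub2))
                (MeasureTheory.IntegrableOn.mono_set (hxint.norm.const_mul CK)
                  (hsub1.trans hsub2))
                measurableSet_Ioc (fun s hs => ?_)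
              have hsIcc : s ∈ Icc (0:ℝ) T :=
                Ioc_subset_Icc_self (hsub2 (hsub1 hs))
              calc ‖K ε s (x s)‖ ≤ ‖K ε s‖ * ‖x s‖ := (K ε s).le_opNorm _
                _ ≤ CK * ‖x s‖ := mul_le_mul_of_nonneg_right
                    (hCK (ε, s) ⟨⟨hε.1.le, hε.2⟩, hsIcc⟩) (norm_nonneg _)
          _ ≤ ∫ s in Set.Ioc (0:ℝ) ε, CK * ‖x s‖ := by
              refine MeasureTheory.setIntegral_mono_set
                (MeasureTheory.IntegrableOn.mono_set (hxint.norm.const_mul CK) hsub2)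
                ?_ (HasSubset.Subset.eventuallyLE hsub1)
              filter_upwards with s
              positivity
          _ = CK * ∫ s in Set.Ioc (0:ℝ) ε, ‖x s‖ := by
              exact MeasureTheory.integral_const_mul CK _
      have h1 := hbound A CA hCA0 hCA hAc 0 (α*ε) le_rfl hαεp.le hαεε
      have h2 := hbound B CB hCB0 hCB hBc (α*ε) ε hαεp.le hαεε le_rfl
      have hρ0 : 0 ≤ ∫ s in Set.Ioc (0:ℝ) ε, ‖x s‖ :=
        MeasureTheory.integral_nonneg (fun s => norm_nonneg _)
      calc ‖g ε‖ ≤ ‖∫ s in (0:ℝ)..(α*ε), A ε s (x s)‖ + ‖∫ s in (α*ε)..ε, B ε s (x s)‖ :=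
            norm_add_le _ _
        _ ≤ CA * (∫ s in Set.Ioc (0:ℝ) ε, ‖x s‖) + CB * ∫ s in Set.Ioc (0:ℝ) ε, ‖x s‖ :=
            add_le_add h1 h2
        _ = (CA + CB) * ∫ s in Set.Ioc (0:ℝ) ε, ‖x s‖ := by ring
    have hgt : Tendsto g (𝓝[>] (0:ℝ)) (𝓝 0) := by
      refine squeeze_zero_norm' hgb ?_
      simpa using hρ.const_mul (CA + CB)
    have hft : Tendsto f (𝓝[>] (0:ℝ)) (𝓝 0) := by
      have := ((hfd 0).continuousAt.continuousWithinAt (s := Set.Ioi (0:ℝ))).tendsto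
      rwa [hf0] at this
    have htend0 : Tendsto h (𝓝[>] (0:ℝ)) (𝓝 0) := by
      have := hgt.sub hft
      simpa using this
    have htendc : Tendsto h (𝓝[>] (0:ℝ)) (𝓝 (h t)) := by
      refine Tendsto.congr' ?_ tendsto_const_nhds
      filter_upwards [Ioc_mem_nhdsGT_of_mem (Set.mem_Ico.2 ⟨le_rfl, ht.1⟩)] with ε hε
      exact hstep ε hε
    have hzero : h t = 0 := tendsto_nhds_unique htendc htend0
    have : g t - f t = 0 := hzero
    exact sub_eq_zero.1 this
end

section
/- Let K be a real symmetric m×m matrix with eigenvalue 1, and d ∈ ℝ^m with ⟨d, φ⟩ ≠ 0 for some unit eigenvector φ of K for eigenvalue 1. Then there is no bounded continuous function x : (0,1] → ℝ^m solving ∫₀^{t/2} K x(s) ds + ∫_{t/2}^{t} (K − 2E) x(s) ds = d t for all t ∈ (0,1]; however, unbounded continuous solutions (growing like ln t as t → 0⁺) exist. -/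
open Matrix Real MeasureTheory intervalIntegral

section Aux

lemma aux_integrableOn_log_Ioc01 : IntegrableOn Real.log (Set.Ioc 0 1) volume := by
  have key : ∀ n : ℕ, (0:ℝ) < ((n:ℝ)+2)⁻¹ ∧ ((n:ℝ)+2)⁻¹ ≤ 1 := by
    intro n
    constructor
    · positivity
    · rw [inv_le_one₀ (by positivity)]; linarith [Nat.cast_nonneg (α := ℝ) n]
  have := MeasureTheory.integrableOn_Ioc_of_intervalIntegral_norm_bounded_left
    (f := Real.log) (l := Filter.atTop) (I := (1:ℝ))
    (a := fun n : ℕ => ((n:ℝ)+2)⁻¹) (a₀ := 0) (b := 1) ?_ ?_ ?_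
  · exact this
  · intro n
    obtain ⟨hpos, hle⟩ := key n
    have := intervalIntegrable_log (μ := volume) (a := ((n:ℝ)+2)⁻¹) (b := 1)
      (by rw [Set.uIcc_of_le hle]; intro h; exact absurd h.1 (by simpa using hpos))
    exact (intervalIntegrable_iff_integrableOn_Ioc_of_le hle).mp this
  · apply tendsto_inv_atTop_zero.comp
    apply Filter.tendsto_atTop_add_const_right
    exact tendsto_natCast_atTop_atTop
  · apply Filter.Eventually.of_forall
    intro n
    obtain ⟨hpos, hle⟩ := key n
    set ε : ℝ := ((n:ℝ)+2)⁻¹ with hε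
    have hne : (0:ℝ) ∉ Set.uIcc ε 1 := by
      rw [Set.uIcc_of_le hle]; intro h; exact absurd h.1 (by simpa using hpos)
    have hcong : ∀ x ∈ Set.Ioc ε 1, ‖Real.log x‖ = -Real.log x := by
      intro x hx
      rw [Real.norm_eq_abs, abs_of_nonpos (Real.log_nonpos (hpos.trans hx.1).le hx.2)]
    calc ∫ x in Set.Ioc ε 1, ‖Real.log x‖
        = ∫ x in Set.Ioc ε 1, -Real.log x :=
          setIntegral_congr_fun measurableSet_Ioc hcong
      _ = ∫ x in ε..1, -Real.log x := (intervalIntegral.integral_of_le hle).symm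
      _ = -(∫ x in ε..1, Real.log x) := intervalIntegral.integral_neg
      _ = -(1 * Real.log 1 - ε * Real.log ε - 1 + ε) := by rw [integral_log]
      _ ≤ 1 := by
          rw [Real.log_one]
          nlinarith [Real.log_nonpos hpos.le hle, hpos.le]

lemma aux_intervalIntegrable_log (a b : ℝ) (ha : 0 ≤ a) (hb1 : b ≤ 1) (hab : a ≤ b) :
    IntervalIntegrable Real.log volume a b := by
  rw [intervalIntegrable_iff_integrableOn_Ioc_of_le hab]
  exact aux_integrableOn_log_Ioc01.mono_set
    (Set.Ioc_subset_Ioc (le_refl _ |>.trans ha) hb1)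

lemma aux_integral_log_from_zero (c : ℝ) (hc : 0 < c) (hc1 : c ≤ 1) :
    ∫ s in (0:ℝ)..c, Real.log s = c * Real.log c - c := by
  have hint : IntegrableOn Real.log (Set.uIcc 0 c) volume := by
    rw [Set.uIcc_of_le hc.le, integrableOn_Icc_iff_integrableOn_Ioc]
    exact aux_integrableOn_log_Ioc01.mono_set (Set.Ioc_subset_Ioc_right hc1)
  have hcont := intervalIntegral.continuousOn_primitive_interval_left hint
  have h0mem : (0:ℝ) ∈ Set.uIcc 0 c := Set.left_mem_uIcc
  have h1 : Filter.Tendsto (fun u => ∫ s in u..c, Real.log s)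
      (nhdsWithin 0 (Set.Ioi 0)) (nhds (∫ s in (0:ℝ)..c, Real.log s)) := by
    have ht := (hcont 0 h0mem).tendsto
    rw [Set.uIcc_of_le hc.le] at ht
    have heq : nhdsWithin (0:ℝ) (Set.Ioc 0 c) = nhdsWithin 0 (Set.Ioi 0) :=
      nhdsWithin_Ioc_eq_nhdsGT hc
    rw [← heq]
    exact ht.mono_left (nhdsWithin_mono 0 Set.Ioc_subset_Icc_self)
  have h2 : Filter.Tendsto (fun u => ∫ s in u..c, Real.log s)
      (nhdsWithin 0 (Set.Ioi 0)) (nhds (c * Real.log c - c)) := by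
    have hmul : Filter.Tendsto (fun u : ℝ => u * Real.log u)
        (nhdsWithin 0 (Set.Ioi 0)) (nhds 0) := by
      have := tendsto_log_mul_rpow_nhdsGT_zero zero_lt_one
      simp only [Real.rpow_one] at this
      exact this.congr (fun u => mul_comm _ _)
    have hfun : Filter.Tendsto (fun u : ℝ => c * Real.log c - u * Real.log u - c + u)
        (nhdsWithin 0 (Set.Ioi 0)) (nhds (c * Real.log c - 0 - c + 0)) :=
      ((tendsto_const_nhds.sub hmul).sub tendsto_const_nhds).add
        (tendsto_nhdsWithin_of_tendsto_nhds Filter.tendsto_id)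
    rw [sub_zero, add_zero] at hfun
    refine Filter.Tendsto.congr' ?_ hfun
    filter_upwards [self_mem_nhdsWithin] with u hu
    rw [integral_log]
  exact tendsto_nhds_unique h1 h2

lemma aux_no_bounded_G (G : ℝ → ℝ) (C α : ℝ) (hα : α ≠ 0)
    (heq : ∀ t ∈ Set.Ioc (0:ℝ) 1, 2 * G (t/2) - G t = α * t)
    (hG : ∀ t ∈ Set.Ioc (0:ℝ) 1, |G t| ≤ C * t) : False := by
  have hpow : ∀ n : ℕ, ((1:ℝ)/2)^n ∈ Set.Ioc (0:ℝ) 1 := by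
    intro n
    exact ⟨by positivity, pow_le_one₀ (by norm_num) (by norm_num)⟩
  set a : ℕ → ℝ := fun n => 2^n * G (((1:ℝ)/2)^n) with ha
  have hrec : ∀ n : ℕ, a (n+1) = a n + α := by
    intro n
    have h := heq (((1:ℝ)/2)^n) (hpow n)
    rw [show ((1:ℝ)/2)^n / 2 = ((1:ℝ)/2)^(n+1) by ring] at h
    have hc : (2:ℝ)^n * ((1:ℝ)/2)^n = 1 := by rw [← mul_pow]; norm_num
    simp only [ha]
    linear_combination (2:ℝ)^n * h + α * hc
  have hlin : ∀ n : ℕ, a n = a 0 + n * α := by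
    intro n
    induction n with
    | zero => simp
    | succ k ih => rw [hrec k, ih]; push_cast; ring
  have hbd : ∀ n : ℕ, |a n| ≤ C := by
    intro n
    have h := hG (((1:ℝ)/2)^n) (hpow n)
    have h2 : |a n| = 2^n * |G (((1:ℝ)/2)^n)| := by
      rw [ha]; rw [abs_mul, abs_of_nonneg (by positivity : (0:ℝ) ≤ 2^n)]
    rw [h2]
    calc 2^n * |G (((1:ℝ)/2)^n)| ≤ 2^n * (C * ((1:ℝ)/2)^n) := by
          apply mul_le_mul_of_nonneg_left h (by positivity)
      _ = C := by rw [show (2:ℝ)^n * (C * ((1:ℝ)/2)^n) = C * (2^n * ((1:ℝ)/2)^n) by ring,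
            ← mul_pow]; norm_num
  obtain ⟨n, hn⟩ := exists_nat_gt ((C + |a 0|) / |α|)
  have hna : (C + |a 0|) < n * |α| := by
    rw [div_lt_iff₀ (abs_pos.mpr hα)] at hn; linarith
  have h4 : (n:ℝ) * |α| ≤ |a 0 + (n:ℝ)*α| + |a 0| := by
    have e1 : (n:ℝ) * |α| = |(n:ℝ)*α| := by
      rw [abs_mul, Nat.abs_cast]
    have e2 : |(n:ℝ)*α| = |(a 0 + (n:ℝ)*α) + (-(a 0))| := by
      congr 1; ring
    rw [e1, e2]
    calc |(a 0 + (n:ℝ)*α) + (-(a 0))| ≤ |a 0 + (n:ℝ)*α| + |(-(a 0))| := abs_add_le _ _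
      _ = |a 0 + (n:ℝ)*α| + |a 0| := by rw [abs_neg]
  have h5 := hbd n
  rw [hlin n] at h5
  linarith

lemma aux_decomp (m : ℕ) (K : Matrix (Fin m) (Fin m) ℝ) (hK : K.IsSymm) (d : Fin m → ℝ) :
    ∃ p v : Fin m → ℝ, K.mulVec p = p ∧ K.mulVec v - v = d - p := by
  classical
  set A : Matrix (Fin m) (Fin m) ℝ := K - 1 with hA
  have hAh : A.IsHermitian := by
    have hKh : K.IsHermitian := by
      rw [Matrix.IsHermitian, Matrix.conjTranspose_eq_transpose_of_trivial]
      exact hK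
    exact hKh.sub Matrix.isHermitian_one
  have hsym : A.toEuclideanLin.IsSymmetric := Matrix.isHermitian_iff_isSymmetric.mp hAh
  set T := A.toEuclideanLin with hT
  set S : Submodule ℝ (EuclideanSpace ℝ (Fin m)) := LinearMap.range T with hS
  set d' : EuclideanSpace ℝ (Fin m) := (WithLp.equiv 2 (Fin m → ℝ)).symm d with hd'
  set p' : EuclideanSpace ℝ (Fin m) :=
    d' - (S.orthogonalProjection d' : EuclideanSpace ℝ (Fin m)) with hp'
  have hp'mem : p' ∈ Sᗮ := Submodule.sub_starProjection_mem_orthogonal (K := S) d'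
  have hTp' : T p' = 0 := by
    have h0 : inner (𝕜 := ℝ) (T p') (T p') = 0 := by
      rw [hsym p' (T p')]
      rw [real_inner_comm]
      exact (Submodule.mem_orthogonal S p').mp hp'mem (T (T p')) (LinearMap.mem_range_self T _)
    exact inner_self_eq_zero.mp h0
  obtain ⟨v', hv'⟩ : d' - p' ∈ S := by
    have : d' - p' = (S.orthogonalProjection d' : EuclideanSpace ℝ (Fin m)) := by
      rw [hp']; abel
    rw [this]; exact Submodule.coe_mem _
  refine ⟨WithLp.equiv 2 (Fin m → ℝ) p', WithLp.equiv 2 (Fin m → ℝ) v', ?_, ?_⟩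
  · have := congrArg (WithLp.equiv 2 (Fin m → ℝ)) hTp'
    rw [hT, WithLp.equiv_apply, Matrix.piLp_ofLp_toEuclideanLin, Matrix.toLin'_apply] at this
    have h2 : A.mulVec (WithLp.equiv 2 (Fin m → ℝ) p') = 0 := this
    rw [hA, Matrix.sub_mulVec, Matrix.one_mulVec, sub_eq_zero] at h2
    exact h2
  · have := congrArg (WithLp.equiv 2 (Fin m → ℝ)) hv'
    rw [hT, WithLp.equiv_apply, Matrix.piLp_ofLp_toEuclideanLin, Matrix.toLin'_apply] at this
    rw [hA, Matrix.sub_mulVec, Matrix.one_mulVec] at this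
    rw [WithLp.equiv_apply, WithLp.equiv_apply, this]
    simp [hd', hp']

end Aux

/-- no bounded continuous solution exists, but unbounded
continuous solutions do. -/
theorem no_bounded_solution_but_unbounded_exists (m : ℕ)
    (K : Matrix (Fin m) (Fin m) ℝ) (hK : K.IsSymm)
    (φ : Fin m → ℝ) (hφunit : φ ⬝ᵥ φ = 1) (heig : K.mulVec φ = φ)
    (d : Fin m → ℝ) (hd : d ⬝ᵥ φ ≠ 0) :
    (¬ ∃ x : ℝ → Fin m → ℝ,
        ContinuousOn x (Set.Ioc 0 1) ∧
        (∃ Cb : ℝ, ∀ t ∈ Set.Ioc (0 : ℝ) 1, ‖x t‖ ≤ Cb) ∧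
        ∀ t ∈ Set.Ioc (0 : ℝ) 1,
          (∫ s in (0 : ℝ)..(t / 2), K.mulVec (x s)) +
            (∫ s in (t / 2)..t,
              (K - 2 • (1 : Matrix (Fin m) (Fin m) ℝ)).mulVec (x s)) = t • d) ∧
    (∃ x : ℝ → Fin m → ℝ,
        ContinuousOn x (Set.Ioc 0 1) ∧
        ∀ t ∈ Set.Ioc (0 : ℝ) 1,
          (∫ s in (0 : ℝ)..(t / 2), K.mulVec (x s)) +
            (∫ s in (t / 2)..t,
              (K - 2 • (1 : Matrix (Fin m) (Fin m) ℝ)).mulVec (x s)) = t • d) := by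
  classical
  -- pointwise projection identities
  have hKφ : ∀ w : Fin m → ℝ, K.mulVec w ⬝ᵥ φ = w ⬝ᵥ φ := by
    intro w
    calc K.mulVec w ⬝ᵥ φ = φ ⬝ᵥ K.mulVec w := dotProduct_comm _ _
      _ = (φ ᵥ* K) ⬝ᵥ w := Matrix.dotProduct_mulVec _ _ _
      _ = (Kᵀ *ᵥ φ) ⬝ᵥ w := by rw [Matrix.mulVec_transpose]
      _ = w ⬝ᵥ φ := by rw [hK.eq, heig, dotProduct_comm]
  have hMp : ∀ w : Fin m → ℝ,
      (K - 2 • (1 : Matrix (Fin m) (Fin m) ℝ)).mulVec w ⬝ᵥ φ = -(w ⬝ᵥ φ) := by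
    intro w
    rw [Matrix.sub_mulVec, sub_dotProduct, hKφ, Matrix.smul_mulVec,
      Matrix.one_mulVec, smul_dotProduct, two_smul]
    ring
  constructor
  · -- no bounded solution
    rintro ⟨x, hxc, ⟨Cb, hCb⟩, heqn⟩
    -- the projection continuous linear map
    set Lφ : (Fin m → ℝ) →L[ℝ] ℝ := LinearMap.toContinuousLinearMap
      { toFun := fun v => v ⬝ᵥ φ
        map_add' := fun u w => add_dotProduct u w φ
        map_smul' := fun c u => smul_dotProduct c u φ } with hLφdef
    have hLφ : ∀ v : Fin m → ℝ, Lφ v = v ⬝ᵥ φ := fun v => rfl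
    -- integrability of x on subintervals of [0,1]
    have hxint : ∀ a b : ℝ, 0 ≤ a → b ≤ 1 → a ≤ b → IntervalIntegrable x volume a b := by
      intro a b ha hb1 hab
      rw [intervalIntegrable_iff_integrableOn_Ioc_of_le hab]
      have hsub : Set.Ioc a b ⊆ Set.Ioc (0:ℝ) 1 := Set.Ioc_subset_Ioc ha hb1
      have hmeas : AEStronglyMeasurable x (volume.restrict (Set.Ioc a b)) :=
        (hxc.mono hsub).aestronglyMeasurable measurableSet_Ioc
      refine Integrable.mono' (integrable_const Cb) hmeas ?_
      rw [ae_restrict_iff' measurableSet_Ioc]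
      exact Filter.Eventually.of_forall fun s hs => hCb s (hsub hs)
    have hKxint : ∀ a b : ℝ, 0 ≤ a → b ≤ 1 → a ≤ b →
        IntervalIntegrable (fun s => K.mulVec (x s)) volume a b := by
      intro a b ha hb1 hab
      set LK : (Fin m → ℝ) →L[ℝ] (Fin m → ℝ) :=
        LinearMap.toContinuousLinearMap (Matrix.mulVecLin K) with hLK
      have h := hxint a b ha hb1 hab
      exact ⟨LK.integrable_comp h.1, LK.integrable_comp h.2⟩
    have hMxint : ∀ a b : ℝ, 0 ≤ a → b ≤ 1 → a ≤ b →
        IntervalIntegrable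
          (fun s => (K - 2 • (1 : Matrix (Fin m) (Fin m) ℝ)).mulVec (x s)) volume a b := by
      intro a b ha hb1 hab
      set LM : (Fin m → ℝ) →L[ℝ] (Fin m → ℝ) :=
        LinearMap.toContinuousLinearMap
          (Matrix.mulVecLin (K - 2 • (1 : Matrix (Fin m) (Fin m) ℝ))) with hLM
      have h := hxint a b ha hb1 hab
      exact ⟨LM.integrable_comp h.1, LM.integrable_comp h.2⟩
    set y : ℝ → ℝ := fun s => Lφ (x s) with hy
    have hyint : ∀ a b : ℝ, 0 ≤ a → b ≤ 1 → a ≤ b → IntervalIntegrable y volume a b := by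
      intro a b ha hb1 hab
      have h := hxint a b ha hb1 hab
      exact ⟨Lφ.integrable_comp h.1, Lφ.integrable_comp h.2⟩
    set G : ℝ → ℝ := fun t => ∫ s in (0:ℝ)..t, y s with hG
    set α : ℝ := d ⬝ᵥ φ with hα
    -- the functional equation for G
    have hGeq : ∀ t ∈ Set.Ioc (0:ℝ) 1, 2 * G (t/2) - G t = α * t := by
      intro t ht
      obtain ⟨ht0, ht1⟩ := ht
      have ht2a : (0:ℝ) ≤ t/2 := by linarith
      have ht2b : t/2 ≤ 1 := by linarith
      have ht2c : t/2 ≤ t := by linarith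
      have h := congrArg Lφ (heqn t ⟨ht0, ht1⟩)
      rw [map_add, ← Lφ.intervalIntegral_comp_comm (hKxint 0 (t/2) le_rfl ht2b ht2a),
        ← Lφ.intervalIntegral_comp_comm (hMxint (t/2) t ht2a ht1 ht2c),
        Lφ.map_smul] at h
      simp only [hLφ, hKφ, hMp, smul_eq_mul] at h
      have hsplit : (∫ s in (0:ℝ)..(t/2), x s ⬝ᵥ φ) + (∫ s in (t/2)..t, x s ⬝ᵥ φ)
          = ∫ s in (0:ℝ)..t, x s ⬝ᵥ φ := by
        apply intervalIntegral.integral_add_adjacent_intervals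
        · exact hyint 0 (t/2) le_rfl ht2b ht2a
        · exact hyint (t/2) t ht2a ht1 ht2c
      rw [intervalIntegral.integral_neg] at h
      have hGt : G t = ∫ s in (0:ℝ)..t, x s ⬝ᵥ φ := rfl
      have hGt2 : G (t/2) = ∫ s in (0:ℝ)..(t/2), x s ⬝ᵥ φ := rfl
      rw [hGt, hGt2, ← hsplit]
      linarith [h]
    -- the bound for G
    set Cφ : ℝ := ∑ i, |φ i| with hCφ
    have hybd : ∀ s ∈ Set.Ioc (0:ℝ) 1, |y s| ≤ Cb * Cφ := by
      intro s hs
      have hys : y s = ∑ i, x s i * φ i := rfl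
      have h1 : |y s| ≤ ∑ i, |x s i * φ i| := by
        rw [hys]; exact Finset.abs_sum_le_sum_abs _ _
      have h2 : ∀ i, |x s i * φ i| ≤ Cb * |φ i| := by
        intro i
        rw [abs_mul]
        apply mul_le_mul_of_nonneg_right _ (abs_nonneg _)
        exact le_trans (norm_le_pi_norm (x s) i) (hCb s hs)
      calc |y s| ≤ ∑ i, |x s i * φ i| := h1
        _ ≤ ∑ i, Cb * |φ i| := Finset.sum_le_sum fun i _ => h2 i
        _ = Cb * Cφ := by rw [hCφ, Finset.mul_sum]
    have hGbd : ∀ t ∈ Set.Ioc (0:ℝ) 1, |G t| ≤ (Cb * Cφ) * t := by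
      intro t ht
      have h := intervalIntegral.norm_integral_le_of_norm_le_const
        (a := 0) (b := t) (C := Cb * Cφ) (f := y) ?_
      · rw [Real.norm_eq_abs] at h
        calc |G t| ≤ (Cb * Cφ) * |t - 0| := h
          _ = (Cb * Cφ) * t := by rw [sub_zero, abs_of_pos ht.1]
      · intro s hs
        rw [Set.uIoc_of_le ht.1.le] at hs
        exact hybd s ⟨hs.1, le_trans hs.2 ht.2⟩
    exact aux_no_bounded_G G (Cb * Cφ) α hd hGeq hGbd
  · -- an unbounded solution exists
    obtain ⟨p, v, hp, hv⟩ := aux_decomp m K hK d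
    set f : ℝ → ℝ := fun s => (-(Real.log s) - 1) / Real.log 2 with hf
    set F : ℝ → ℝ := fun c => -(c * Real.log c) / Real.log 2 with hF
    refine ⟨fun s => f s • p + v, ?_, ?_⟩
    · apply ContinuousOn.add _ continuousOn_const
      apply ContinuousOn.fun_smul _ continuousOn_const
      apply ContinuousOn.div_const
      apply ContinuousOn.sub _ continuousOn_const
      apply ContinuousOn.neg
      exact Real.continuousOn_log.mono fun s hs => ne_of_gt hs.1
    · intro t ht
      obtain ⟨ht0, ht1⟩ := ht
      have ht2a : (0:ℝ) < t/2 := by linarith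
      have ht2b : t/2 ≤ 1 := by linarith
      have ht2c : t/2 ≤ t := by linarith
      have hlog2 : Real.log 2 ≠ 0 := ne_of_gt (Real.log_pos one_lt_two)
      -- interval integrability of f
      have hfint : ∀ a b : ℝ, 0 ≤ a → b ≤ 1 → a ≤ b → IntervalIntegrable f volume a b := by
        intro a b ha hb1 hab
        exact (((aux_intervalIntegrable_log a b ha hb1 hab).neg).sub
          intervalIntegrable_const).div_const _
      -- value of the primitive
      have hfval : ∀ c : ℝ, 0 < c → c ≤ 1 → (∫ s in (0:ℝ)..c, f s) = F c := by
        intro c hc hc1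
        have h1 : IntervalIntegrable (fun s => -Real.log s) volume 0 c :=
          (aux_intervalIntegrable_log 0 c le_rfl hc1 hc.le).neg
        have e1 : (∫ s in (0:ℝ)..c, (-Real.log s - 1))
            = (∫ s in (0:ℝ)..c, -Real.log s) - ∫ s in (0:ℝ)..c, (1:ℝ) :=
          intervalIntegral.integral_sub h1 intervalIntegrable_const
        have e2 : (∫ s in (0:ℝ)..c, -Real.log s) = -∫ s in (0:ℝ)..c, Real.log s :=
          intervalIntegral.integral_neg
        calc (∫ s in (0:ℝ)..c, f s)
            = (∫ s in (0:ℝ)..c, (-Real.log s - 1)) / Real.log 2 :=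
              intervalIntegral.integral_div _ _
          _ = ((∫ s in (0:ℝ)..c, -Real.log s) - ∫ s in (0:ℝ)..c, (1:ℝ)) / Real.log 2 := by
              rw [e1]
          _ = ((-(c * Real.log c - c)) - c) / Real.log 2 := by
              rw [e2, aux_integral_log_from_zero c hc hc1,
                intervalIntegral.integral_const]
              simp
          _ = F c := by rw [hF]; ring
      -- pointwise forms of the integrands
      have hpt1 : ∀ s : ℝ, K.mulVec (f s • p + v) = f s • p + K.mulVec v := by
        intro s
        rw [Matrix.mulVec_add, Matrix.mulVec_smul, hp]
      have hMp' : (K - 2 • (1 : Matrix (Fin m) (Fin m) ℝ)).mulVec p = -p := by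
        rw [Matrix.sub_mulVec, hp, Matrix.smul_mulVec, Matrix.one_mulVec, two_smul]
        abel
      have hpt2 : ∀ s : ℝ, (K - 2 • (1 : Matrix (Fin m) (Fin m) ℝ)).mulVec (f s • p + v)
          = f s • (-p) + (K - 2 • (1 : Matrix (Fin m) (Fin m) ℝ)).mulVec v := by
        intro s
        rw [Matrix.mulVec_add, Matrix.mulVec_smul, hMp']
      -- compute the two integrals
      have hint1 : (∫ s in (0:ℝ)..(t/2), K.mulVec (f s • p + v))
          = F (t/2) • p + (t/2) • K.mulVec v := by
        simp only [hpt1]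
        have hsm : IntervalIntegrable (fun s => f s • p) volume 0 (t/2) :=
          ⟨(hfint 0 (t/2) le_rfl ht2b ht2a.le).1.smul_const p,
           (hfint 0 (t/2) le_rfl ht2b ht2a.le).2.smul_const p⟩
        rw [intervalIntegral.integral_add hsm intervalIntegrable_const]
        rw [intervalIntegral.integral_smul_const, hfval (t/2) ht2a ht2b,
          intervalIntegral.integral_const, sub_zero]
      have hf2 : (∫ s in (t/2)..t, f s) = F t - F (t/2) := by
        have hsplit : (∫ s in (0:ℝ)..(t/2), f s) + (∫ s in (t/2)..t, f s)
            = ∫ s in (0:ℝ)..t, f s :=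
          intervalIntegral.integral_add_adjacent_intervals
            (hfint 0 (t/2) le_rfl ht2b ht2a.le) (hfint (t/2) t ht2a.le ht1 ht2c)
        rw [hfval (t/2) ht2a ht2b] at hsplit
        rw [hfval t ht0 ht1] at hsplit
        linarith
      have hint2 : (∫ s in (t/2)..t, (K - 2 • (1 : Matrix (Fin m) (Fin m) ℝ)).mulVec
            (f s • p + v))
          = (F t - F (t/2)) • (-p)
            + (t/2) • (K - 2 • (1 : Matrix (Fin m) (Fin m) ℝ)).mulVec v := by
        simp only [hpt2]
        have hsm : IntervalIntegrable (fun s => f s • (-p)) volume (t/2) t :=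
          ⟨(hfint (t/2) t ht2a.le ht1 ht2c).1.smul_const (-p),
           (hfint (t/2) t ht2a.le ht1 ht2c).2.smul_const (-p)⟩
        rw [intervalIntegral.integral_add hsm intervalIntegrable_const]
        rw [intervalIntegral.integral_smul_const, hf2, intervalIntegral.integral_const]
        congr 2
        ring
      rw [hint1, hint2]
      -- the scalar identity 2 F(t/2) - F t = t
      have hFkey : 2 * F (t/2) - F t = t := by
        rw [hF]
        simp only
        rw [show t/2 = t/2 by rfl, Real.log_div (ne_of_gt ht0) two_ne_zero]
        field_simp
        ring
      -- the matrix algebra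
      have hw2 : (K - 2 • (1 : Matrix (Fin m) (Fin m) ℝ)).mulVec v
          = K.mulVec v - (2:ℝ) • v := by
        rw [Matrix.sub_mulVec, Matrix.smul_mulVec, Matrix.one_mulVec]
        congr 1
        exact (Nat.cast_smul_eq_nsmul ℝ 2 v).symm
      have hKv : K.mulVec v = (d - p) + v := by
        rw [← hv]; abel
      rw [hw2, hKv]
      have hFt : F t = 2 * F (t/2) - t := by linarith
      rw [hFt]
      module
end
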